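/- Let L+ be an FD-reordered order of variables with respect to a set of unary FDs. If a appears before b in L+, then the first variable (earliest in L+) that transitively implies b does not appear strictly before the first variable that transitively implies a. -/

import Mathlib

/-- `Implied fds v y`: variable `v` transitively implies `y` via the unary FDs
`fds` (every variable implies itself). -/
def Implied {V : Type*} (fds : List (V × V)) : V → V → Prop :=
  Relation.ReflTransGen fun x y => (x, y) ∈ fds

/-- Let `Lp` be an FD-reordered order, i.e. it satisfies the
consecutive-implication property: variables transitively implied by `v` that
come after `v` appear consecutively immediately after `v`.  If `a` appears
before `b` in `Lp`, then the first variable of `Lp` transitively implying `b`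
(`fb`) does not appear strictly before the first variable transitively implying
`a` (`fa`). -/
theorem first_implier_monotone {V : Type*} [DecidableEq V]
    (fds : List (V × V)) (Lp : List V) (hnd : Lp.Nodup)
    (hconsec : ∀ v w u : V, v ∈ Lp → w ∈ Lp → u ∈ Lp →
      Lp.idxOf v < Lp.idxOf u → Lp.idxOf u < Lp.idxOf w →
      Implied fds v w → Implied fds v u)
    (a b fa fb : V) (ha : a ∈ Lp) (hb : b ∈ Lp) (hfa : fa ∈ Lp) (hfb : fb ∈ Lp)
    (hab : Lp.idxOf a < Lp.idxOf b)
    (hfaImp : Implied fds fa a)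
    (hfaMin : ∀ g ∈ Lp, Implied fds g a → Lp.idxOf fa ≤ Lp.idxOf g)
    (hfbImp : Implied fds fb b)
    (hfbMin : ∀ g ∈ Lp, Implied fds g b → Lp.idxOf fb ≤ Lp.idxOf g) :
    Lp.idxOf fa ≤ Lp.idxOf fb := by
  by_contra h
  push_neg at h
  have h1 : Lp.idxOf fa ≤ Lp.idxOf a := hfaMin a ha Relation.ReflTransGen.refl
  have h2 : Implied fds fb a :=
    hconsec fb b a hfb hb ha (lt_of_lt_of_le h h1) hab hfbImp
  exact absurd (hfaMin fb hfb h2) (not_le.mpr h)
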